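/- Let f(x) = (1+x)·ln(1+x) − x − x²/((2/3)x + 2) for x > −1. Then f''(x) ≥ 0 for all x > −1, f'(0) = 0, and f(0) = 0; consequently f(x) ≥ 0 for all x > −1. -/

import Mathlib

noncomputable def f1 : ℝ → ℝ := fun x =>
  Real.log (1 + x) - (2 * x * ((2/3) * x + 2) - x ^ 2 * (2/3)) / ((2/3) * x + 2) ^ 2

noncomputable def f2 : ℝ → ℝ := fun x => x ^ 2 * (x + 9) / ((1 + x) * (x + 3) ^ 3)

lemma Dpos {x : ℝ} (hx : x > -1) : (0:ℝ) < (2/3) * x + 2 := by nlinarith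

lemma key1 {x : ℝ} (hx : x > -1) :
    HasDerivAt (fun x : ℝ => (1 + x) * Real.log (1 + x) - x - x ^ 2 / ((2/3) * x + 2))
      (f1 x) x := by
  have h0 : (1:ℝ) + x ≠ 0 := by linarith
  have hD : ((2/3) * x + 2 : ℝ) ≠ 0 := ne_of_gt (Dpos hx)
  have h1 : HasDerivAt (fun x : ℝ => 1 + x) 1 x := by
    simpa using (hasDerivAt_id x).const_add (1:ℝ)
  have hlog : HasDerivAt (fun x : ℝ => Real.log (1 + x)) ((1+x)⁻¹ * 1) x :=
    (Real.hasDerivAt_log h0).comp x h1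
  have hprod := h1.mul hlog
  have hDf : HasDerivAt (fun x : ℝ => (2/3) * x + 2) (2/3) x := by
    simpa using ((hasDerivAt_id x).const_mul (2/3 : ℝ)).add_const 2
  have hq := (hasDerivAt_pow 2 x).div hDf hD
  have h := (hprod.sub (hasDerivAt_id x)).sub hq
  refine h.congr_deriv (Eq.symm ?_)
  have hlog1 : (1+x) * ((1+x)⁻¹ * 1) = 1 := by field_simp
  simp only [f1]
  rw [hlog1]
  field_simp
  norm_num
  ring

lemma key2 {x : ℝ} (hx : x > -1) : HasDerivAt f1 (f2 x) x := by
  have h0 : (1:ℝ) + x ≠ 0 := by linarith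
  have hD : ((2/3) * x + 2 : ℝ) ≠ 0 := ne_of_gt (Dpos hx)
  have hD2 : (((2/3) * x + 2 : ℝ))^2 ≠ 0 := pow_ne_zero _ hD
  have h1 : HasDerivAt (fun x : ℝ => 1 + x) 1 x := by
    simpa using (hasDerivAt_id x).const_add (1:ℝ)
  have hlog : HasDerivAt (fun x : ℝ => Real.log (1 + x)) ((1+x)⁻¹ * 1) x :=
    (Real.hasDerivAt_log h0).comp x h1
  have hDf : HasDerivAt (fun x : ℝ => (2/3) * x + 2) (2/3 : ℝ) x := by
    simpa using ((hasDerivAt_id x).const_mul (2/3 : ℝ)).add_const 2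
  have hN : HasDerivAt (fun x : ℝ => 2 * x * ((2/3) * x + 2) - x ^ 2 * (2/3))
      (2 * ((2/3) * x + 2) + 2 * x * (2/3) - 2 * x * (2/3)) x := by
    have := (((hasDerivAt_id x).const_mul 2).mul hDf).sub ((hasDerivAt_pow 2 x).mul_const (2/3:ℝ))
    simp only [id_eq] at this
    refine this.congr_deriv (Eq.symm ?_)
    ring
  have hM : HasDerivAt (fun x : ℝ => ((2/3) * x + 2) ^ 2) (2 * ((2/3)*x+2) * (2/3)) x := by
    have := hDf.pow 2
    refine this.congr_deriv (Eq.symm ?_)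
    ring
  have h := hlog.sub (hN.div hM hD2)
  refine h.congr_deriv (Eq.symm ?_)
  simp only [f2]
  have hx3 : (x + 3 : ℝ) ≠ 0 := by linarith
  have hD4 : (((2/3) * x + 2 : ℝ) ^ 2) ^ 2 ≠ 0 := pow_ne_zero _ hD2
  have hden1 : ((1 + x) * (x + 3) ^ 3 : ℝ) ≠ 0 := mul_ne_zero h0 (pow_ne_zero _ hx3)
  rw [mul_one, show ((1 + x : ℝ))⁻¹ = 1 / (1 + x) by rw [inv_eq_one_div],
    div_sub_div _ _ h0 hD4, div_eq_div_iff hden1 (mul_ne_zero h0 hD4)]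
  ring

lemma f1_zero : f1 0 = 0 := by simp [f1]

lemma f2_nonneg {x : ℝ} (hx : x > -1) : 0 ≤ f2 x := by
  apply div_nonneg
  · nlinarith [sq_nonneg x]
  · have : (0:ℝ) < 1 + x := by linarith
    have : (0:ℝ) < x + 3 := by linarith
    positivity

theorem stmt_1 (f : ℝ → ℝ)
    (hf : ∀ x : ℝ, f x = (1 + x) * Real.log (1 + x) - x - x ^ 2 / ((2 / 3) * x + 2)) :
    (∀ x : ℝ, x > -1 → deriv (deriv f) x ≥ 0) ∧ deriv f 0 = 0 ∧ f 0 = 0 ∧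
      ∀ x : ℝ, x > -1 → f x ≥ 0 := by
  have hfe : f = fun x : ℝ => (1 + x) * Real.log (1 + x) - x - x ^ 2 / ((2/3) * x + 2) :=
    funext hf
  have keyf : ∀ x : ℝ, x > -1 → HasDerivAt f (f1 x) x := by
    intro x hx; rw [hfe]; exact key1 hx
  have hderiv : ∀ x : ℝ, x > -1 → deriv f x = f1 x := fun x hx => (keyf x hx).deriv
  have hopen : IsOpen (Set.Ioi (-1 : ℝ)) := isOpen_Ioi
  have hdd : ∀ x : ℝ, x > -1 → deriv (deriv f) x = f2 x := by
    intro x hx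
    have hev : deriv f =ᶠ[nhds x] f1 := by
      filter_upwards [hopen.mem_nhds (by exact hx)] with y hy using hderiv y hy
    rw [hev.deriv_eq, (key2 hx).deriv]
  have hd0 : deriv f 0 = 0 := by rw [hderiv 0 (by norm_num), f1_zero]
  have hf0 : f 0 = 0 := by rw [hf]; norm_num
  refine ⟨fun x hx => by rw [hdd x hx]; exact f2_nonneg hx, hd0, hf0, ?_⟩
  -- f1 monotone on Ioi (-1)
  have hmono1 : MonotoneOn f1 (Set.Ioi (-1 : ℝ)) := by
    apply monotoneOn_of_deriv_nonneg (convex_Ioi _)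
    · exact fun y hy => ((key2 hy).continuousAt).continuousWithinAt
    · intro y hy
      rw [interior_Ioi] at hy
      exact (key2 hy).differentiableAt.differentiableWithinAt
    · intro y hy
      rw [interior_Ioi] at hy
      rw [(key2 hy).deriv]
      exact f2_nonneg hy
  intro x hx
  rcases le_or_gt 0 x with h | h
  · -- f monotone on Ici 0
    have hmono : MonotoneOn f (Set.Ici (0 : ℝ)) := by
      apply monotoneOn_of_deriv_nonneg (convex_Ici _)
      · exact fun y hy => ((keyf y (by simp at hy; linarith)).continuousAt).continuousWithinAt
      · intro y hy
        rw [interior_Ici] at hy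
        exact (keyf y (by simp at hy; linarith)).differentiableAt.differentiableWithinAt
      · intro y hy
        rw [interior_Ici] at hy
        have hy1 : y > -1 := by simp at hy; linarith
        rw [hderiv y hy1]
        calc (0:ℝ) = f1 0 := f1_zero.symm
          _ ≤ f1 y := hmono1 (by norm_num) (by exact hy1) (le_of_lt hy)
    have := hmono (Set.self_mem_Ici) h h
    rw [hf0] at this; exact this
  · -- f antitone on Ioc (-1) 0
    have hanti : AntitoneOn f (Set.Ioc (-1 : ℝ) 0) := by
      apply antitoneOn_of_deriv_nonpos (convex_Ioc _ _)
      · exact fun y hy => ((keyf y hy.1).continuousAt).continuousWithinAt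
      · intro y hy
        rw [interior_Ioc] at hy
        exact (keyf y hy.1).differentiableAt.differentiableWithinAt
      · intro y hy
        rw [interior_Ioc] at hy
        rw [hderiv y hy.1]
        calc f1 y ≤ f1 0 := hmono1 (by exact hy.1) (by norm_num) (le_of_lt hy.2)
          _ = 0 := f1_zero
    have := hanti ⟨hx, le_of_lt h⟩ ⟨by norm_num, le_refl 0⟩ (le_of_lt h)
    rw [hf0] at this; exact this
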